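/- Let r be a natural number and m = 2^r. For every Borel probability measure μ on ℝ, min_{1 ≤ k ≤ m} E_μ[g(kx)] ≤ 1/(r+2), where E_μ[g(kx)] = ∫ g(kx) dμ(x). -/

import Mathlib

open MeasureTheory

noncomputable def sawtooth (x : ℝ) : ℝ := x + ⌊(1:ℝ)/2 - x⌋

noncomputable def phi (t : ℝ) : ℝ := (if 0 < t then (1:ℝ) else 0) - t

lemma sawtooth_le (x : ℝ) : sawtooth x ≤ 1/2 := by
  have := Int.floor_le ((1:ℝ)/2 - x)
  unfold sawtooth; linarith

lemma lt_sawtooth (x : ℝ) : -(1/2) < sawtooth x := by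
  have := Int.lt_floor_add_one ((1:ℝ)/2 - x)
  unfold sawtooth; push_cast at this ⊢; linarith

lemma sawtooth_add_int (y : ℝ) (n : ℤ) : sawtooth (y + n) = sawtooth y := by
  unfold sawtooth
  have h : (1:ℝ)/2 - (y + n) = ((1:ℝ)/2 - y) - n := by ring
  rw [h, Int.floor_sub_intCast]
  push_cast; ring

lemma sawtooth_two_mul (x : ℝ) : sawtooth (2*x) = sawtooth (2 * sawtooth x) := by
  have h : 2*x = 2 * sawtooth x + ((-2 * ⌊(1:ℝ)/2 - x⌋ : ℤ) : ℝ) := by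
    unfold sawtooth; push_cast; ring
  rw [h, sawtooth_add_int]

lemma key (t : ℝ) (h1 : -(1/2) < t) (h2 : t ≤ 1/2) :
    t + phi (sawtooth (2*t)) ≤ phi t := by
  rcases le_or_gt t (-(1/4)) with hc | hc
  · have hf : ⌊(1:ℝ)/2 - 2*t⌋ = 1 := by
      rw [Int.floor_eq_iff]
      push_cast
      constructor <;> linarith
    have hs : sawtooth (2*t) = 2*t + 1 := by unfold sawtooth; rw [hf]; push_cast; ring
    rw [hs]; unfold phi
    have hpos : 0 < 2*t + 1 := by linarith
    rw [if_pos hpos, if_neg (by linarith : ¬ (0:ℝ) < t)]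
    linarith
  · rcases le_or_gt t (1/4) with hc2 | hc2
    · have hf : ⌊(1:ℝ)/2 - 2*t⌋ = 0 := by
        rw [Int.floor_eq_iff]
        push_cast
        constructor <;> linarith
      have hs : sawtooth (2*t) = 2*t := by unfold sawtooth; rw [hf]; push_cast; ring
      rw [hs]; unfold phi
      rcases lt_or_ge 0 t with hp | hp
      · rw [if_pos hp, if_pos (by linarith)]; linarith
      · rw [if_neg (by linarith), if_neg (by linarith)]; linarith
    · have hf : ⌊(1:ℝ)/2 - 2*t⌋ = -1 := by
        rw [Int.floor_eq_iff]
        push_cast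
        constructor <;> linarith
      have hs : sawtooth (2*t) = 2*t - 1 := by unfold sawtooth; rw [hf]; push_cast; ring
      rw [hs]; unfold phi
      rw [if_neg (by linarith : ¬ (0:ℝ) < 2*t - 1), if_pos (by linarith : (0:ℝ) < t)]
      linarith

lemma sawtooth_le_phi (x : ℝ) : sawtooth x ≤ phi (sawtooth x) := by
  have h1 := lt_sawtooth x
  have h2 := sawtooth_le x
  unfold phi; split_ifs <;> linarith

lemma pointwise (r : ℕ) : ∀ x : ℝ,
    ∑ j ∈ Finset.range (r+1), sawtooth (2^j * x) ≤ phi (sawtooth x) := by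
  induction r with
  | zero => intro x; simpa using sawtooth_le_phi x
  | succ n ih =>
    intro x
    rw [Finset.sum_range_succ']
    have e1 : ∑ j ∈ Finset.range (n+1), sawtooth (2^(j+1) * x)
        = ∑ j ∈ Finset.range (n+1), sawtooth (2^j * (2*x)) := by
      refine Finset.sum_congr rfl fun j _ => ?_
      congr 1; ring
    have e2 : sawtooth ((2:ℝ)^0 * x) = sawtooth x := by norm_num
    rw [e1, e2]
    have h3 : sawtooth (2*x) = sawtooth (2 * sawtooth x) := sawtooth_two_mul x
    have h4 := key (sawtooth x) (lt_sawtooth x) (sawtooth_le x)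
    have h5 := ih (2*x)
    rw [h3] at h5
    linarith

lemma sawtooth_measurable : Measurable sawtooth := by
  unfold sawtooth
  exact measurable_id.add (measurable_from_top.comp ((measurable_const.sub measurable_id).floor))

lemma sawtooth_integrable (μ : Measure ℝ) [IsProbabilityMeasure μ] (a : ℝ) :
    Integrable (fun x => sawtooth (a * x)) μ := by
  refine (integrable_const (1:ℝ)).mono'
    ((sawtooth_measurable.comp (measurable_const.mul measurable_id)).aestronglyMeasurable) ?_
  filter_upwards with x
  have h1 := lt_sawtooth (a*x)
  have h2 := sawtooth_le (a*x)
  rw [Real.norm_eq_abs, abs_le]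
  constructor <;> linarith

theorem stmt_4 (r : ℕ) (m : ℕ) (hm : m = 2^r)
    (μ : Measure ℝ) [IsProbabilityMeasure μ] :
    ∃ k : ℕ, 1 ≤ k ∧ k ≤ m ∧ (∫ x, sawtooth (k * x) ∂μ) ≤ 1 / (r + 2) := by
  by_contra hcon
  push_neg at hcon
  set c : ℝ := 1 / ((r:ℝ) + 2) with hc
  have hcpos : (0:ℝ) < (r:ℝ) + 2 := by positivity
  -- for each j ≤ r, the integral of sawtooth (2^j x) exceeds c
  have hj : ∀ j : ℕ, j ≤ r → c < ∫ x, sawtooth ((2:ℝ)^j * x) ∂μ := by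
    intro j hjr
    have h1 : 1 ≤ 2^j := Nat.one_le_two_pow
    have h2 : 2^j ≤ m := by rw [hm]; exact Nat.pow_le_pow_right (by norm_num) hjr
    have := hcon (2^j) h1 h2
    have hcast : ∀ x : ℝ, ((2^j : ℕ) : ℝ) * x = (2:ℝ)^j * x := by
      intro x; push_cast; ring
    simp_rw [hcast] at this
    exact this
  -- integrability
  have hint : ∀ j : ℕ, Integrable (fun x => sawtooth ((2:ℝ)^j * x)) μ :=
    fun j => sawtooth_integrable μ _
  have hint1 : Integrable (fun x => sawtooth x) μ := by
    have := sawtooth_integrable μ 1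
    simpa using this
  have hintsum : Integrable (fun x => ∑ j ∈ Finset.range (r+1), sawtooth ((2:ℝ)^j * x)) μ :=
    integrable_finset_sum _ (fun j _ => hint j)
  -- upper bound on the integral of F
  have hub : ∫ x, (sawtooth x + ∑ j ∈ Finset.range (r+1), sawtooth ((2:ℝ)^j * x)) ∂μ ≤ 1 := by
    have hle : ∀ x : ℝ,
        sawtooth x + ∑ j ∈ Finset.range (r+1), sawtooth ((2:ℝ)^j * x) ≤ 1 := by
      intro x
      have h1 := pointwise r x
      have h2 := lt_sawtooth x
      have h3 : sawtooth x + phi (sawtooth x) ≤ 1 := by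
        unfold phi; split_ifs <;> linarith
      linarith
    calc ∫ x, (sawtooth x + ∑ j ∈ Finset.range (r+1), sawtooth ((2:ℝ)^j * x)) ∂μ
        ≤ ∫ _x, (1:ℝ) ∂μ := integral_mono (hint1.add hintsum) (integrable_const 1) hle
      _ = 1 := by simp
  -- lower bound
  have heq : ∫ x, (sawtooth x + ∑ j ∈ Finset.range (r+1), sawtooth ((2:ℝ)^j * x)) ∂μ
      = (∫ x, sawtooth x ∂μ) + ∑ j ∈ Finset.range (r+1), ∫ x, sawtooth ((2:ℝ)^j * x) ∂μ := by
    rw [integral_add hint1 hintsum, integral_finset_sum _ (fun j _ => hint j)]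
  have h0 : c < ∫ x, sawtooth x ∂μ := by
    have := hj 0 (Nat.zero_le r)
    simpa using this
  have hsumlt : (r+1 : ℝ) * c < ∑ j ∈ Finset.range (r+1), ∫ x, sawtooth ((2:ℝ)^j * x) ∂μ := by
    have := Finset.sum_lt_sum_of_nonempty (s := Finset.range (r+1)) (f := fun _ => c)
      (g := fun j => ∫ x, sawtooth ((2:ℝ)^j * x) ∂μ) (by simp)
      (fun j hjmem => hj j (Nat.lt_succ_iff.mp (Finset.mem_range.mp hjmem)))
    simpa [Finset.sum_const, mul_comm] using this
  have hctot : ((r:ℝ) + 2) * c = 1 := by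
    rw [hc]; field_simp
  linarith [hub, heq ▸ hub]
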